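/- For indices i and j of a null-terminated string S sharing a common Lyndon prefix α (Ls_i = Ls_j = α), we have S_i ≺ S_j if and only if S_{i+|α|} ≺ S_{j+|α|}. -/
import Mathlib


/-- Strict lexicographic order on strings over a totally ordered alphabet. -/
def Slt {α : Type*} [LinearOrder α] (u v : List α) : Prop := List.Lex (· < ·) u v

/-- `S` is null-terminated: its last character is strictly smaller than every other character. -/
def NullTerminated {α : Type*} [LinearOrder α] (S : List α) : Prop :=
  ∀ i, ∀ _h : i + 1 < S.length, S[S.length - 1]'(by omega) < S[i]'(by omega)

/-- `nss S i` : position of the next smaller suffix of `i` (with `S.drop S.length = ε`). -/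
noncomputable def nss {α : Type*} [LinearOrder α] (S : List α) (i : ℕ) : ℕ :=
  sInf { j | i < j ∧ j ≤ S.length ∧ Slt (S.drop j) (S.drop i) }

/-- `pss S i` : position of the previous smaller suffix of `i`, or `-1` if none exists. -/
noncomputable def pss {α : Type*} [LinearOrder α] (S : List α) (i : ℕ) : ℤ :=
  sSup (insert (-1) { j : ℤ | 0 ≤ j ∧ j < (i : ℤ) ∧ Slt (S.drop j.toNat) (S.drop i) })

/-- A non-empty string is a Lyndon word iff it is smaller than all of its proper suffixes. -/
def IsLyndon {α : Type*} [LinearOrder α] (w : List α) : Prop :=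
  w ≠ [] ∧ ∀ j, 0 < j → j < w.length → Slt w (w.drop j)

/-- `Ls S i` : the Lyndon prefix of the suffix `S.drop i`, which equals `S[i..nss[i])`. -/
noncomputable def Ls {α : Type*} [LinearOrder α] (S : List α) (i : ℕ) : List α :=
  (S.drop i).take (nss S i - i)


lemma lex_append_left_iff {α : Type*} [LinearOrder α] (a u v : List α) :
    List.Lex (· < ·) (a ++ u) (a ++ v) ↔ List.Lex (· < ·) u v := by
  induction a with
  | nil => rfl
  | cons x s ih =>
    simp only [List.cons_append]
    constructor
    · intro h
      cases h with
      | cons h => exact ih.mp h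
      | rel h => exact absurd h (lt_irrefl x)
    · intro h
      exact List.Lex.cons (ih.mpr h)

lemma eq_take_append_drop {α : Type*} (m : ℕ) (l : List α) :
    l = l.take m ++ l.drop (l.take m).length := by
  rw [List.length_take]
  rcases le_total m l.length with h | h
  · rw [min_eq_left h, List.take_append_drop]
  · rw [min_eq_right h, List.drop_length, List.append_nil, List.take_of_length_le h]

/-- if `S_i` and `S_j` share the Lyndon prefix `a`, then
`S_i ≺ S_j ↔ S_{i+|a|} ≺ S_{j+|a|}`. -/
theorem stmt15 {α : Type*} [LinearOrder α] (S : List α) (hS : NullTerminated S)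
    {i j : ℕ} (hi : i < S.length) (hj : j < S.length) {a : List α}
    (hLi : Ls S i = a) (hLj : Ls S j = a) :
    (Slt (S.drop i) (S.drop j) ↔ Slt (S.drop (i + a.length)) (S.drop (j + a.length))) := by
  have hdi : S.drop i = a ++ S.drop (i + a.length) := by
    conv_lhs => rw [eq_take_append_drop (nss S i - i) (S.drop i)]
    rw [show (S.drop i).take (nss S i - i) = a from hLi, ← List.drop_drop]

  have hdj : S.drop j = a ++ S.drop (j + a.length) := by
    conv_lhs => rw [eq_take_append_drop (nss S j - j) (S.drop j)]
    rw [show (S.drop j).take (nss S j - j) = a from hLj, ← List.drop_drop]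

  rw [Slt, Slt, hdi, hdj, lex_append_left_iff]
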